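/- With D(c) and J(c) as defined for clans in {+,•}ⁿ, one has D(c) = {d ∈ {+,•}ⁿ : d_i = c_i for all i ∉ J(c)}, where indices in J(c) are the positions n-j for j ∈ J(c) (at which c has •, but d may have + or •). -/
import Mathlib


/-- A clan of length `n` is a string in `{+, •}ⁿ`, encoded as `Fin n → Bool`
with `true` representing `+` and `false` representing `•` (a number). -/
abbrev Clan (n : ℕ) := Fin n → Bool

/-- The sequence `h_j` attached to a clan `c = (c₁, …, c_n)`: `h₀ = 0`, and
`h_j = h_{j-1}` if `c_{n-j+1} = •`, `h_j = h_{j-1} + 1` if `c_{n-j+1} = +` and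
`h_{j-1} = j - 1`, `h_j = h_{j-1} + 2` if `c_{n-j+1} = +` and `h_{j-1} ≤ j - 2`.
(Indices of `c` are 1-indexed in the informal description; here `c_{n-j+1}`
is the entry of `c : Fin n → Bool` at the 0-indexed position `n - j`.) -/
def hseq (n : ℕ) (c : Clan n) : ℕ → ℕ
  | 0 => 0
  | j + 1 =>
    let p := hseq n c j
    if hj : n - (j + 1) < n then
      if c ⟨n - (j + 1), hj⟩ = false then p
      else if p = j then p + 1
      else if p + 1 ≤ j then p + 2
      else p
    else p

/-- `J(c)`: the set of odd `j` with `1 ≤ j ≤ n - 1` such that `h_j(c) = j` and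
`c_{n-j} = •` (1-indexed), i.e. the entry at 0-indexed position `n - j - 1` is `•`. -/
def Jset (n : ℕ) (c : Clan n) : Set ℕ :=
  {j | j % 2 = 1 ∧ 1 ≤ j ∧ j ≤ n - 1 ∧ hseq n c j = j ∧
    ∀ h : n - j - 1 < n, c ⟨n - j - 1, h⟩ = false}

/-- The recursively defined set `D(c)` of clans indexing the terms of the
characteristic cycle of `L_c`: for a clan of length `0` (hence for length `1`)
it is the singleton `{c}`; `D((+, c')) = {(+, d') : d' ∈ D(c')}`;
`D((•, c')) = {(•, d') : d' ∈ D(c')}` unless `n` is even and `h_{n-1}(c') = n-1`,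
in which case `D((•, c')) = {(•, d') : d' ∈ D(c')} ∪ {(+, d') : d' ∈ D(c')}`. -/
def Dset : (n : ℕ) → Clan n → Set (Clan n)
  | 0, c => {c}
  | n + 1, c =>
    let c' : Clan n := fun i => c i.succ
    if c 0 = true then
      {d | d 0 = true ∧ (fun i : Fin n => d i.succ) ∈ Dset n c'}
    else if (n + 1) % 2 = 0 ∧ hseq n c' n = n then
      {d | (fun i : Fin n => d i.succ) ∈ Dset n c'}
    else
      {d | d 0 = false ∧ (fun i : Fin n => d i.succ) ∈ Dset n c'}

/-- `N(n)`: the number of clans of length `n` with `J(c) = ∅`, i.e. whose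
characteristic cycle is irreducible. -/
noncomputable def Ncount (n : ℕ) : ℕ :=
  {c : Clan n | Jset n c = ∅}.ncard

/-- `N(n, j)`: the number of clans of length `n` with `J(c) = ∅` and `h_n(c) = j`. -/
noncomputable def Ncj (n j : ℕ) : ℕ :=
  {c : Clan n | Jset n c = ∅ ∧ hseq n c n = j}.ncard

/-- `D(c)` consists exactly of the clans agreeing with `c` at every position
other than the positions `n - j` (1-indexed; `n - j - 1` in 0-indexed terms)
for `j ∈ J(c)`. -/

lemma hseq_tail (n : ℕ) (c : Clan (n+1)) :
    ∀ j, j ≤ n → hseq (n+1) c j = hseq n (fun i => c i.succ) j := by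
  intro j
  induction j with
  | zero => intro _; rfl
  | succ j ih =>
    intro hj
    have h1 : n + 1 - (j+1) < n + 1 := by omega
    have h2 : n - (j+1) < n := by omega
    have hc : c ⟨n + 1 - (j+1), h1⟩ = c (Fin.succ ⟨n - (j+1), h2⟩) := by
      congr 1
      rw [Fin.succ_mk]
      apply Fin.ext
      simp
      omega
    simp only [hseq]
    rw [dif_pos h1, dif_pos h2, ih (by omega), hc]

lemma Jset_succ (n : ℕ) (c : Clan (n+1)) (j : ℕ) :
    j ∈ Jset (n+1) c ↔ (j ∈ Jset n (fun i => c i.succ) ∨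
      (j = n ∧ n % 2 = 1 ∧ hseq n (fun i => c i.succ) n = n ∧ c 0 = false)) := by
  have hht := hseq_tail n c
  simp only [Jset, Set.mem_setOf_eq]
  constructor
  · rintro ⟨h1, h2, h3, h4, h5⟩
    by_cases hjn : j = n
    · subst hjn
      right
      refine ⟨rfl, h1, by rw [← hht j le_rfl]; exact h4, ?_⟩
      have h5' := h5 (show j+1-j-1 < j+1 by omega)
      have h0 : (⟨j+1-j-1, show j+1-j-1 < j+1 by omega⟩ : Fin (j+1)) = 0 := by
        apply Fin.ext; simp
      rwa [h0] at h5'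
    · left
      have hjle : j ≤ n - 1 := by omega
      refine ⟨h1, h2, hjle, by rw [← hht j (by omega)]; exact h4, ?_⟩
      intro h
      have h5' := h5 (show n+1-j-1 < n+1 by omega)
      have he : c (Fin.succ ⟨n-j-1, h⟩) = c ⟨n+1-j-1, show n+1-j-1 < n+1 by omega⟩ := by
        congr 1
        rw [Fin.succ_mk]
        apply Fin.ext
        simp
        omega
      show c (Fin.succ ⟨n-j-1, h⟩) = false
      rw [he]; exact h5'
  · rintro (⟨h1, h2, h3, h4, h5⟩ | ⟨rfl, h1, h2, h3⟩)
    · refine ⟨h1, h2, by omega, by rw [hht j (by omega)]; exact h4, ?_⟩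
      intro h
      have h5' := h5 (show n-j-1 < n by omega)
      have he : c (Fin.succ ⟨n-j-1, show n-j-1 < n by omega⟩) = c ⟨n+1-j-1, h⟩ := by
        congr 1
        rw [Fin.succ_mk]
        apply Fin.ext
        simp
        omega
      rw [← he]; exact h5'
    · refine ⟨h1, by omega, by omega, by rw [hht j le_rfl]; exact h2, ?_⟩
      intro h
      have h0 : (⟨j+1-j-1, h⟩ : Fin (j+1)) = 0 := by apply Fin.ext; simp
      rw [h0]; exact h3

theorem stmt9 (n : ℕ) (c : Clan n) :
    Dset n c =
      {d : Clan n | ∀ i : Fin n, (¬ ∃ j ∈ Jset n c, (i : ℕ) = n - j - 1) → d i = c i} := by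
  induction n with
  | zero =>
    ext d
    simp only [Dset, Set.mem_singleton_iff, Set.mem_setOf_eq]
    constructor
    · rintro rfl i; exact i.elim0
    · intro _; funext i; exact i.elim0
  | succ n ih =>
    have hJ := Jset_succ n c
    have htop : (∃ j ∈ Jset (n+1) c, (0:ℕ) = n + 1 - j - 1) ↔
        (n % 2 = 1 ∧ hseq n (fun i => c i.succ) n = n ∧ c 0 = false) := by
      constructor
      · rintro ⟨j, hj, h0⟩
        rcases (hJ j).1 hj with hj' | ⟨rfl, h⟩
        · simp only [Jset, Set.mem_setOf_eq] at hj'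
          obtain ⟨-, h2, h3, -, -⟩ := hj'
          omega
        · exact h
      · intro h
        exact ⟨n, (hJ n).2 (Or.inr ⟨rfl, h⟩), by omega⟩
    have htail : ∀ k : Fin n, ((∃ j ∈ Jset (n+1) c, ((k:ℕ)+1) = n + 1 - j - 1) ↔
        (∃ j ∈ Jset n (fun i => c i.succ), (k:ℕ) = n - j - 1)) := by
      intro k
      constructor
      · rintro ⟨j, hj, hk⟩
        rcases (hJ j).1 hj with hj' | ⟨rfl, -⟩
        · refine ⟨j, hj', ?_⟩
          simp only [Jset, Set.mem_setOf_eq] at hj'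
          omega
        · omega
      · rintro ⟨j, hj, hk⟩
        refine ⟨j, (hJ j).2 (Or.inl hj), ?_⟩
        simp only [Jset, Set.mem_setOf_eq] at hj
        omega
    have hih := ih (fun i => c i.succ)
    ext d
    simp only [Dset]
    by_cases hc0 : c 0 = true
    · rw [if_pos hc0]
      simp only [hih, Set.mem_setOf_eq]
      constructor
      · rintro ⟨hd0, hdt⟩ i hi
        rcases Fin.eq_zero_or_eq_succ i with rfl | ⟨k, rfl⟩
        · rw [hd0, hc0]
        · exact hdt k (fun hex => hi (by simpa using (htail k).2 hex))
      · intro H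
        have h0 : d 0 = c 0 := by
          refine H 0 (fun hex => ?_)
          have := htop.1 (by simpa using hex)
          rw [this.2.2] at hc0; exact absurd hc0 (by simp)
        exact ⟨by rw [h0, hc0], fun k hk => H k.succ
          (fun hex => hk ((htail k).1 (by simpa using hex)))⟩
    · rw [if_neg hc0]
      rw [Bool.not_eq_true] at hc0
      by_cases hcond : (n + 1) % 2 = 0 ∧ hseq n (fun i => c i.succ) n = n
      · rw [if_pos hcond]
        have htopmem : (∃ j ∈ Jset (n+1) c, (0:ℕ) = n + 1 - j - 1) :=
          htop.2 ⟨by omega, hcond.2, hc0⟩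
        simp only [hih, Set.mem_setOf_eq]
        constructor
        · intro hdt i hi
          rcases Fin.eq_zero_or_eq_succ i with rfl | ⟨k, rfl⟩
          · exact absurd (by simpa using htopmem) hi
          · exact hdt k (fun hex => hi (by simpa using (htail k).2 hex))
        · intro H
          exact fun k hk => H k.succ (fun hex => hk ((htail k).1 (by simpa using hex)))
      · rw [if_neg hcond]
        simp only [hih, Set.mem_setOf_eq]
        constructor
        · rintro ⟨hd0, hdt⟩ i hi
          rcases Fin.eq_zero_or_eq_succ i with rfl | ⟨k, rfl⟩
          · rw [hd0, hc0]
          · exact hdt k (fun hex => hi (by simpa using (htail k).2 hex))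
        · intro H
          have h0 : d 0 = c 0 := by
            refine H 0 (fun hex => ?_)
            have := htop.1 (by simpa using hex)
            exact hcond ⟨by omega, this.2.1⟩
          exact ⟨by rw [h0, hc0], fun k hk => H k.succ
            (fun hex => hk ((htail k).1 (by simpa using hex)))⟩
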